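/- With the notation of the endomorphism monoid End₁ of the regular representation (W₁ = RF₁, F₁) of the infinite cyclic group F₁ = ⟨x⟩: the set T_e of all endomorphisms ν_{(w,e)} (w ∈ W₁) is a prime ideal of the monoid End₁, and every prime ideal of End₁ different from T_e contains T_e or contains T_0 = {ν_{(0,g)} : g ∈ F₁}; moreover T_e is a minimal prime ideal. -/

import Mathlib

open LaurentPolynomial

/-- An endomorphism of the regular representation `(W₁, F₁) = (RF₁, F₁)` of the infinite cyclic
group `F₁ = ⟨x⟩` over `R`: an `R`-linear endomorphism `f` of the group algebra
`RF₁ = R[T;T⁻¹]` together with an endomorphism `φ` of the (additively written) infinite cyclic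
group `ℤ`, compatible with the action of the group by multiplication. -/
structure End1 (R : Type*) [CommRing R] where
  f : LaurentPolynomial R →ₗ[R] LaurentPolynomial R
  φ : ℤ →+ ℤ
  compat : ∀ (a : LaurentPolynomial R) (n : ℤ), f (a * T n) = f a * T (φ n)

variable {R : Type*} [CommRing R]

/-- Composition of endomorphisms makes `End1 R` a monoid; `ν ∘ μ` has components
`ν.f ∘ μ.f` and `ν.φ ∘ μ.φ`. -/
noncomputable instance : Mul (End1 R) :=
  ⟨fun z u => ⟨z.f ∘ₗ u.f, z.φ.comp u.φ, fun a n => by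
    simp [LinearMap.comp_apply, u.compat, z.compat]⟩⟩

/-- The identity endomorphism `ν_{(1,x)}`. -/
noncomputable instance : One (End1 R) :=
  ⟨⟨LinearMap.id, AddMonoidHom.id ℤ, fun a n => rfl⟩⟩


/-- An ideal of the monoid `End1 R`: a nonempty subset `I` with `M·I ⊆ I` and `I·M ⊆ I`. -/
def IsMonoidIdeal (I : Set (End1 R)) : Prop :=
  I.Nonempty ∧ ∀ a ∈ I, ∀ m : End1 R, m * a ∈ I ∧ a * m ∈ I

/-- A prime ideal of the monoid `End1 R`. -/
def IsPrimeMonoidIdeal (I : Set (End1 R)) : Prop :=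
  IsMonoidIdeal I ∧ ∀ a b : End1 R, a * b ∈ I → a ∈ I ∨ b ∈ I

/- ### Auxiliary material -/

lemma End1.ext' {a b : End1 R} (hf : a.f = b.f) (hφ : a.φ = b.φ) : a = b := by
  cases a; cases b; simp_all

@[simp] lemma End1.mul_f (a b : End1 R) : (a * b).f = a.f ∘ₗ b.f := rfl
@[simp] lemma End1.mul_φ (a b : End1 R) : (a * b).φ = a.φ.comp b.φ := rfl

/-- The zero endomorphism `ν_{(0,e)}`. -/
noncomputable def End1.zero : End1 R := ⟨0, 0, by simp⟩

/-- The augmentation `ε : R[T;T⁻¹] → R ⊆ R[T;T⁻¹]`, as an algebra homomorphism. -/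
noncomputable def eps : LaurentPolynomial R →ₐ[R] LaurentPolynomial R :=
  AddMonoidAlgebra.mapDomainAlgHom R R (0 : ℤ →+ ℤ)

lemma eps_single (n : ℤ) (r : R) :
    eps (AddMonoidAlgebra.single n r) = LaurentPolynomial.C r := by
  show AddMonoidAlgebra.mapDomain (0 : ℤ →+ ℤ) (AddMonoidAlgebra.single n r) = _
  rw [AddMonoidAlgebra.mapDomain_single]
  rfl

lemma eps_T (n : ℤ) : eps (T n : LaurentPolynomial R) = 1 := by
  rw [show (T n : LaurentPolynomial R) = AddMonoidAlgebra.single n 1 from rfl, eps_single]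
  simp

/-- The endomorphism `ν_{(1,e)}`. -/
noncomputable def End1.e : End1 R :=
  ⟨eps.toLinearMap, 0, fun a n => by
    simp [map_mul, eps_T]⟩

/-- The endomorphism `ν_{(w,x)}`, multiplication by `w`. -/
noncomputable def End1.mw (w : LaurentPolynomial R) : End1 R :=
  ⟨LinearMap.mulLeft R w, AddMonoidHom.id ℤ, fun a n => by
    simp [LinearMap.mulLeft_apply, mul_assoc]⟩

/-- Any endomorphism with trivial group component factors as `ν_{(w,x)} * ν_{(1,e)}`. -/
lemma End1.factor {z : End1 R} (hz : z.φ = 0) : z = End1.mw (z.f 1) * End1.e := by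
  refine End1.ext' ?_ ?_
  · apply LinearMap.toAddMonoidHom_injective
    apply AddMonoidAlgebra.addMonoidHom_ext
    intro n r
    have hTn : z.f (T n) = z.f 1 := by
      have h := z.compat 1 n
      rw [one_mul, hz, AddMonoidHom.zero_apply, T_zero, mul_one] at h
      exact h
    have h1 : (AddMonoidAlgebra.single n r : LaurentPolynomial R)
        = r • (AddMonoidAlgebra.single n (1 : R) : LaurentPolynomial R) := by
      rw [AddMonoidAlgebra.smul_single', mul_one]
    have hL : z.f (AddMonoidAlgebra.single n r) = r • z.f 1 := by
      rw [h1, map_smul]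
      exact congrArg (r • ·) hTn
    have hR : (End1.mw (z.f 1) * End1.e).f (AddMonoidAlgebra.single n r)
        = z.f 1 * LaurentPolynomial.C r := by
      show (End1.mw (z.f 1)).f (eps (AddMonoidAlgebra.single n r)) = _
      rw [eps_single]
      rfl
    have hC : r • z.f 1 = z.f 1 * LaurentPolynomial.C r := by
      rw [C_eq_algebraMap, ← Algebra.commutes, ← Algebra.smul_def]
    exact hL.trans (hC.trans hR.symm)
  · rw [hz]
    ext n
    simp [End1.mw, End1.e]

lemma End1.mw_φ_ne (w : LaurentPolynomial R) : (End1.mw w).φ ≠ 0 := by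
  intro h
  have : ((End1.mw w).φ : ℤ →+ ℤ) 1 = 0 := by rw [h]; rfl
  simpa [End1.mw] using this

/-- Any nonempty ideal contains `ν_{(0,e)}`. -/
lemma End1.zero_mem {I : Set (End1 R)} (hI : IsMonoidIdeal I) : End1.zero ∈ I := by
  obtain ⟨a, ha⟩ := hI.1
  have := (hI.2 a ha End1.zero).1
  have h : (End1.zero : End1 R) * a = End1.zero := by
    refine End1.ext' ?_ ?_
    · show (End1.zero : End1 R).f ∘ₗ a.f = _
      simp [End1.zero]
    · show (End1.zero : End1 R).φ.comp a.φ = _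
      ext n; simp [End1.zero]
  rwa [h] at this

/-- A prime ideal contained in `T_e` contains `T_e`. -/
lemma End1.min_key {I : Set (End1 R)} (hI : IsPrimeMonoidIdeal I)
    (hsub : I ⊆ {z : End1 R | z.φ = 0}) : {z : End1 R | z.φ = 0} ⊆ I := by
  obtain ⟨a, ha⟩ := hI.1.1
  have haφ : a.φ = 0 := hsub ha
  have hfac : a = End1.mw (a.f 1) * End1.e := End1.factor haφ
  have he : (End1.e : End1 R) ∈ I := by
    rcases hI.2 _ _ (hfac ▸ ha) with h | h
    · exact absurd (hsub h) (End1.mw_φ_ne _)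
    · exact h
  intro z hz
  have := (hI.1.2 _ he (End1.mw (z.f 1))).1
  rwa [← End1.factor hz] at this

theorem stmt10 :
    IsPrimeMonoidIdeal {z : End1 R | z.φ = 0} ∧
    IsMonoidIdeal {z : End1 R | z.f = 0} ∧
    (∀ I : Set (End1 R), IsPrimeMonoidIdeal I → I ≠ {z : End1 R | z.φ = 0} →
      {z : End1 R | z.φ = 0} ⊆ I ∨ {z : End1 R | z.f = 0} ⊆ I) ∧
    (∀ I : Set (End1 R), IsPrimeMonoidIdeal I → I ⊆ {z : End1 R | z.φ = 0} →
      I = {z : End1 R | z.φ = 0}) := by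
  refine ⟨⟨⟨⟨End1.zero, by simp [End1.zero]⟩, ?_⟩, ?_⟩, ⟨⟨End1.zero, by simp [End1.zero]⟩, ?_⟩,
      ?_, ?_⟩
  · -- T_e is an ideal
    intro a ha m
    constructor
    · show m.φ.comp a.φ = 0
      rw [Set.mem_setOf_eq.mp ha]; ext n; simp
    · show a.φ.comp m.φ = 0
      rw [Set.mem_setOf_eq.mp ha]; ext n; simp
  · -- T_e is prime
    intro a b hab
    have h : a.φ.comp b.φ = 0 := hab
    by_cases hb : b.φ = 0
    · exact Or.inr hb
    · left
      have hb1 : b.φ 1 ≠ 0 := fun h' => hb (AddMonoidHom.ext_int h')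
      have : a.φ (b.φ 1) = 0 := by
        have := congrArg (fun f : ℤ →+ ℤ => f 1) h
        simpa using this
      have h2 : (b.φ 1) • (a.φ 1) = 0 := by
        rw [← AddMonoidHom.map_zsmul]
        simpa [smul_eq_mul, mul_one] using this
      rw [smul_eq_mul] at h2
      have : a.φ 1 = 0 := by
        rcases mul_eq_zero.mp h2 with h' | h'
        · exact absurd h' hb1
        · exact h'
      exact AddMonoidHom.ext_int this
  · -- T_0 is an ideal
    intro a ha m
    constructor
    · show m.f ∘ₗ a.f = 0
      rw [Set.mem_setOf_eq.mp ha]; simp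
    · show a.f ∘ₗ m.f = 0
      rw [Set.mem_setOf_eq.mp ha]; simp
  · -- prime ideals ≠ T_e contain T_e or T_0
    intro I hI _
    by_cases h : {z : End1 R | z.φ = 0} ⊆ I
    · exact Or.inl h
    · right
      rw [Set.not_subset] at h
      obtain ⟨t, ht, htI⟩ := h
      intro z hz
      have hzt : z * t = End1.zero := by
        refine End1.ext' ?_ ?_
        · show z.f ∘ₗ t.f = 0
          rw [Set.mem_setOf_eq.mp hz]; simp [End1.zero]
        · show z.φ.comp t.φ = 0
          rw [Set.mem_setOf_eq.mp ht]; ext n; simp [End1.zero]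
      have : z * t ∈ I := hzt ▸ End1.zero_mem hI.1
      rcases hI.2 _ _ this with h' | h'
      · exact h'
      · exact absurd h' htI
  · -- minimality
    intro I hI hsub
    exact Set.Subset.antisymm hsub (End1.min_key hI hsub)
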